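/- Let Q be an N×N real Z-matrix (N ≥ 1) and set B = exp(−Q), where exp is the matrix exponential. Then B is a nonnegative matrix with det(B) > 0, and for every positive integer n there exists a nonnegative matrix K with K^n = B; that is, B is strongly infinitely divisible. -/

import Mathlib

open Matrix

/-- A real square matrix is (entrywise) nonnegative if all of its entries are nonnegative. -/
def IsNonnegMatrix {ι : Type*} (B : Matrix ι ι ℝ) : Prop :=
  ∀ i j, 0 ≤ B i j

/-- A Z-matrix is a real square matrix all of whose off-diagonal entries are nonpositive. -/
def IsZMatrix {ι : Type*} (Q : Matrix ι ι ℝ) : Prop :=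
  ∀ i j, i ≠ j → Q i j ≤ 0

/-- A nonnegative matrix `B` is infinitely divisible if for every positive integer `n`
there exists a nonnegative matrix `K` with `K ^ n = B`. -/
def IsInfinitelyDivisible {ι : Type*} [Fintype ι] [DecidableEq ι] (B : Matrix ι ι ℝ) : Prop :=
  ∀ n : ℕ, 0 < n → ∃ K : Matrix ι ι ℝ, IsNonnegMatrix K ∧ K ^ n = B

/-- `B` is strongly infinitely divisible if it is infinitely divisible and `det B > 0`. -/
def IsStronglyInfinitelyDivisible {ι : Type*} [Fintype ι] [DecidableEq ι]
    (B : Matrix ι ι ℝ) : Prop :=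
  IsInfinitelyDivisible B ∧ 0 < B.det

/-- An inverse M-matrix is an invertible nonnegative matrix whose inverse is a Z-matrix. -/
def IsInverseMMatrix {ι : Type*} [Fintype ι] [DecidableEq ι] (K : Matrix ι ι ℝ) : Prop :=
  IsUnit K.det ∧ IsNonnegMatrix K ∧ IsZMatrix K⁻¹

/-- A stochastic matrix is a nonnegative square matrix each of whose rows sums to `1`. -/
def IsStochasticMatrix {ι : Type*} [Fintype ι] (P : Matrix ι ι ℝ) : Prop :=
  IsNonnegMatrix P ∧ ∀ i, ∑ j, P i j = 1

/-- An intensity matrix is a real square matrix whose off-diagonal entries are nonnegative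
and each of whose rows sums to `0`. -/
def IsIntensityMatrix {ι : Type*} [Fintype ι] (R : Matrix ι ι ℝ) : Prop :=
  (∀ i j, i ≠ j → 0 ≤ R i j) ∧ ∀ i, ∑ j, R i j = 0

section Aux

variable {N : ℕ}

lemma IsNonnegMatrix.pow {M : Matrix (Fin N) (Fin N) ℝ} (hM : IsNonnegMatrix M) (n : ℕ) :
    IsNonnegMatrix (M ^ n) := by
  induction n with
  | zero =>
    intro i j
    rw [pow_zero, Matrix.one_apply]
    split <;> norm_num
  | succ n ih =>
    intro i j
    rw [pow_succ, Matrix.mul_apply]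
    exact Finset.sum_nonneg fun k _ => mul_nonneg (ih i k) (hM k j)

lemma IsNonnegMatrix.mul {A B : Matrix (Fin N) (Fin N) ℝ} (hA : IsNonnegMatrix A)
    (hB : IsNonnegMatrix B) : IsNonnegMatrix (A * B) := by
  intro i j
  rw [Matrix.mul_apply]
  exact Finset.sum_nonneg fun k _ => mul_nonneg (hA i k) (hB k j)

/-- The exponential of an entrywise nonnegative matrix is entrywise nonnegative. -/
lemma exp_nonneg_of_nonneg {M : Matrix (Fin N) (Fin N) ℝ} (hM : IsNonnegMatrix M) :
    IsNonnegMatrix (NormedSpace.exp M) := by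
  letI : SeminormedRing (Matrix (Fin N) (Fin N) ℝ) := Matrix.linftyOpSemiNormedRing
  letI : NormedRing (Matrix (Fin N) (Fin N) ℝ) := Matrix.linftyOpNormedRing
  letI : NormedAlgebra ℝ (Matrix (Fin N) (Fin N) ℝ) := Matrix.linftyOpNormedAlgebra
  intro i j
  have hsum : HasSum (fun n : ℕ => (n.factorial : ℝ)⁻¹ • M ^ n) (NormedSpace.exp M) :=
    NormedSpace.exp_series_hasSum_exp' (𝕂 := ℝ) M
  let φ : Matrix (Fin N) (Fin N) ℝ →+ ℝ :=
    { toFun := fun A => A i j, map_zero' := rfl, map_add' := fun _ _ => rfl }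
  have hφ : Continuous φ := (continuous_apply j).comp (continuous_apply i)
  have h2 : HasSum (fun n : ℕ => ((n.factorial : ℝ)⁻¹ • M ^ n) i j)
      (NormedSpace.exp M i j) := hsum.map φ hφ
  refine h2.nonneg fun n => ?_
  have := hM.pow n i j
  simpa using mul_nonneg (by positivity : (0:ℝ) ≤ (n.factorial : ℝ)⁻¹) this

/-- The exponential of the negative of a Z-matrix is entrywise nonnegative. -/
lemma exp_neg_zmatrix_nonneg {Q : Matrix (Fin N) (Fin N) ℝ} (hQ : IsZMatrix Q) :
    IsNonnegMatrix (NormedSpace.exp (-Q)) := by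
  set c : ℝ := ∑ i, |(-Q) i i| with hc
  have hcM : IsNonnegMatrix (-Q + c • (1 : Matrix (Fin N) (Fin N) ℝ)) := by
    intro i j
    rcases eq_or_ne i j with rfl | hij
    · have h1 : |(-Q) i i| ≤ c := Finset.single_le_sum (f := fun k => |(-Q) k k|)
        (fun k _ => abs_nonneg _) (Finset.mem_univ i)
      have h2 : -((-Q) i i) ≤ c := le_trans (neg_le_abs _) h1
      simp only [Matrix.add_apply, Matrix.smul_apply, Matrix.one_apply_eq, smul_eq_mul, mul_one]
      linarith
    · simp only [Matrix.add_apply, Matrix.smul_apply, Matrix.one_apply_ne hij, smul_eq_mul,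
        mul_zero, add_zero, Matrix.neg_apply, Left.nonneg_neg_iff]
      exact hQ i j hij
  have hcomm : Commute ((-c) • (1 : Matrix (Fin N) (Fin N) ℝ))
      (-Q + c • (1 : Matrix (Fin N) (Fin N) ℝ)) :=
    (Commute.one_left _).smul_left _
  have hsplit : -Q = (-c) • (1 : Matrix (Fin N) (Fin N) ℝ)
      + (-Q + c • (1 : Matrix (Fin N) (Fin N) ℝ)) := by
    rw [neg_smul]; abel
  rw [hsplit, Matrix.exp_add_of_commute _ _ hcomm]
  refine IsNonnegMatrix.mul ?_ (exp_nonneg_of_nonneg hcM)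
  have hdiag : (-c) • (1 : Matrix (Fin N) (Fin N) ℝ) = Matrix.diagonal (fun _ => -c) := by
    ext i j
    rcases eq_or_ne i j with rfl | hij
    · simp
    · simp [Matrix.one_apply_ne hij, Matrix.diagonal_apply_ne _ hij]
  rw [hdiag, Matrix.exp_diagonal]
  intro i j
  rcases eq_or_ne i j with rfl | hij
  · rw [Matrix.diagonal_apply_eq]
    have : NormedSpace.exp (fun _ : Fin N => -c) i = NormedSpace.exp (-c) := Pi.coe_exp _ i
    rw [this, ← Real.exp_eq_exp_ℝ]
    exact (Real.exp_pos _).le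
  · rw [Matrix.diagonal_apply_ne _ hij]

/-- The exponential of the negative of a Z-matrix is invertible. -/
lemma exp_det_ne_zero (A : Matrix (Fin N) (Fin N) ℝ) :
    (NormedSpace.exp A).det ≠ 0 := by
  have h : NormedSpace.exp A * NormedSpace.exp (-A) = 1 := by
    rw [← Matrix.exp_add_of_commute _ _ ((Commute.refl A).neg_right)]
    · simp [NormedSpace.exp_zero]
  intro h0
  have := congrArg Matrix.det h
  rw [Matrix.det_mul, h0, zero_mul, Matrix.det_one] at this
  exact zero_ne_one this

end Aux

theorem stmt0 (N : ℕ) (hN : 1 ≤ N) (Q : Matrix (Fin N) (Fin N) ℝ) (hQ : IsZMatrix Q) :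
    IsNonnegMatrix (NormedSpace.exp (-Q)) ∧
      IsStronglyInfinitelyDivisible (NormedSpace.exp (-Q)) := by
  have hroot : ∀ n : ℕ, 0 < n → ∃ K : Matrix (Fin N) (Fin N) ℝ,
      IsNonnegMatrix K ∧ K ^ n = NormedSpace.exp (-Q) := by
    intro n hn
    refine ⟨NormedSpace.exp (-((n : ℝ)⁻¹ • Q)), ?_, ?_⟩
    · exact exp_neg_zmatrix_nonneg fun i j hij =>
        mul_nonpos_of_nonneg_of_nonpos (by positivity) (hQ i j hij)
    · rw [← Matrix.exp_nsmul]
      congr 1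
      have hn' : (n : ℝ) ≠ 0 := Nat.cast_ne_zero.mpr hn.ne'
      rw [← Nat.cast_smul_eq_nsmul ℝ, smul_neg, smul_smul, mul_inv_cancel₀ hn', one_smul]
  refine ⟨exp_neg_zmatrix_nonneg hQ, hroot, ?_⟩
  obtain ⟨K, hK, hK2⟩ := hroot 2 (by norm_num)
  have hKdet : K.det ≠ 0 := by
    intro h0
    have := congrArg Matrix.det hK2
    rw [Matrix.det_pow, h0] at this
    exact exp_det_ne_zero (-Q) (by rw [← this]; norm_num)
  rw [← hK2, Matrix.det_pow]
  exact pow_two_pos_of_ne_zero hKdet
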